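/- There exists y₀ > 1 such that for all real y with 1 < y < y₀ and all real constants c, C with 0 < c < 1 < C, the following two bounds hold: the sum of (θ(y)/θ′(y))·exp(−y·m)·(y·m)^{m−1}/(m−1)! over integers m with 1 ≤ m ≤ c/(y−1)² is at most 8·c^{1/2}, and the sum of the same quantity over integers m with m ≥ C/(y−1)² is at most 20·exp(−C/8). -/

import Mathlib

open Real
private lemma exp_neg_le_quad {x : ℝ} (hx : 0 ≤ x) :
    Real.exp (-x) ≤ 1 - x + x ^ 2 / 2 := by
  have hE := Real.quadratic_le_exp_of_nonneg hx
  have hP : (0:ℝ) < 1 + x + x ^ 2 / 2 := by nlinarith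
  have hprod : Real.exp (-x) * Real.exp x = 1 := by
    rw [← Real.exp_add]; simp
  nlinarith [Real.exp_pos (-x), Real.exp_pos x,
    mul_nonneg (Real.exp_pos (-x)).le (sub_nonneg.2 hE)]

private lemma exp_neg_ge_cubic {x : ℝ} (hx : 0 ≤ x) (hx1 : x ≤ 1) :
    1 - x + x ^ 2 / 3 ≤ Real.exp (-x) := by
  have hE := Real.exp_bound' hx hx1 (n := 3) (by norm_num)
  have hEle : Real.exp x ≤ 1 + x + x ^ 2 / 2 + (2/9) * x ^ 3 := by
    have hs : ∑ m ∈ Finset.range 3, x ^ m / (m.factorial : ℝ) = 1 + x + x ^ 2 / 2 := by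
      simp [Finset.sum_range_succ, Nat.factorial]
    rw [hs] at hE
    calc Real.exp x ≤ 1 + x + x ^ 2 / 2 + x ^ 3 * (3 + 1) / ((3:ℕ).factorial * 3) := by
          exact_mod_cast hE
      _ = 1 + x + x ^ 2 / 2 + (2/9) * x ^ 3 := by norm_num [Nat.factorial]; ring
  have hprod : Real.exp (-x) * Real.exp x = 1 := by rw [← Real.exp_add]; simp
  have hQP : (1 - x + x ^ 2 / 3) * (1 + x + x ^ 2 / 2 + (2/9) * x ^ 3) ≤ 1 := by
    nlinarith [mul_nonneg hx hx, mul_nonneg (mul_nonneg hx hx) hx,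
      mul_nonneg (mul_nonneg (mul_nonneg hx hx) hx) hx,
      mul_le_one₀ hx1 hx hx1, pow_le_one₀ hx hx1 (n := 5), pow_le_one₀ hx hx1 (n := 3)]
  have hQ : (0:ℝ) ≤ 1 - x + x ^ 2 / 3 := by nlinarith
  nlinarith [Real.exp_pos x, mul_le_mul_of_nonneg_left hEle hQ]

private lemma log_le_quad {u : ℝ} (hu : 0 ≤ u) (hu1 : u ≤ 1) :
    Real.log (1 + u) ≤ u - u ^ 2 / 4 := by
  rw [Real.log_le_iff_le_exp (by linarith)]
  have ht : 0 ≤ u - u ^ 2 / 4 := by nlinarith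
  have := Real.quadratic_le_exp_of_nonneg ht
  nlinarith [sq_nonneg (u - u^2/4)]
-- (n+1)! ≥ (5/2) √(n+1) ((n+1)^(n+1) e^{-(n+1)})
private lemma factorial_lb (n : ℕ) :
    (5/2 : ℝ) * Real.sqrt (n+1) * ((n+1 : ℝ) ^ (n+1) * Real.exp (-((n:ℝ)+1)))
      ≤ ((n+1).factorial : ℝ) := by
  have htend : Filter.Tendsto (Stirling.stirlingSeq ∘ Nat.succ) Filter.atTop (nhds (√π)) :=
    Stirling.tendsto_stirlingSeq_sqrt_pi.comp (Filter.tendsto_add_atTop_nat 1)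
  have hpi : √π ≤ Stirling.stirlingSeq (n+1) :=
    Stirling.stirlingSeq'_antitone.le_of_tendsto htend n
  have hd : (0:ℝ) < Real.sqrt (2 * (n+1)) * (((n:ℝ)+1) / Real.exp 1) ^ (n+1) := by
    positivity
  have hfac : √π * (Real.sqrt (2 * (n+1)) * (((n:ℝ)+1) / Real.exp 1) ^ (n+1))
      ≤ ((n+1).factorial : ℝ) := by
    have := (le_div_iff₀ hd).1 (by
      simpa [Stirling.stirlingSeq, Nat.cast_add, Nat.cast_one] using hpi)
    linarith
  refine le_trans (le_trans ?_ (le_of_eq rfl)) hfac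
  have h1 : Real.sqrt (2 * (n+1)) = Real.sqrt 2 * Real.sqrt (n+1) := by
    rw [Real.sqrt_mul (by norm_num)]
  have h2 : (((n:ℝ)+1) / Real.exp 1) ^ (n+1)
      = ((n:ℝ)+1) ^ (n+1) * Real.exp (-((n:ℝ)+1)) := by
    have he : Real.exp 1 ^ (n+1) = Real.exp ((n:ℝ)+1) := by
      rw [← Real.exp_nat_mul]; push_cast; ring_nf
    rw [div_pow, he, div_eq_mul_inv, ← Real.exp_neg]
  rw [h1, h2]
  have h52 : (5/2 : ℝ) ≤ √π * Real.sqrt 2 := by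
    rw [← Real.sqrt_mul (by positivity)]
    have : (25/4 : ℝ) ≤ π * 2 := by nlinarith [Real.pi_gt_d6]
    nlinarith [Real.sq_sqrt (by positivity : (0:ℝ) ≤ π * 2),
      Real.sqrt_nonneg (π * 2), Real.sqrt_le_sqrt this,
      Real.sqrt_le_sqrt (by norm_num : (25/4:ℝ) ≥ 25/4)]
  have hpos : (0:ℝ) ≤ Real.sqrt (n+1) * (((n:ℝ)+1) ^ (n+1) * Real.exp (-((n:ℝ)+1))) := by
    positivity
  calc (5/2 : ℝ) * Real.sqrt (n+1) * (((n:ℝ)+1) ^ (n+1) * Real.exp (-((n:ℝ)+1)))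
      ≤ (√π * Real.sqrt 2) * (Real.sqrt (n+1) * (((n:ℝ)+1) ^ (n+1) * Real.exp (-((n:ℝ)+1)))) := by
        nlinarith [hpos, h52]
    _ = √π * (Real.sqrt 2 * Real.sqrt (n+1) * (((n:ℝ)+1) ^ (n+1) * Real.exp (-((n:ℝ)+1)))) := by
        ring
private lemma y_exp_le {y : ℝ} (hy1 : 1 < y) (hy2 : y ≤ 1.01) :
    y * Real.exp (1 - y) ≤ Real.exp (-((y-1)^2/4)) := by
  have h := log_le_quad (u := y - 1) (by linarith) (by linarith)
  have h2 : Real.log y ≤ (y-1) - (y-1)^2/4 := by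
    have he : 1 + (y - 1) = y := by ring
    rwa [he] at h
  have h3 : y ≤ Real.exp ((y-1) - (y-1)^2/4) :=
    (Real.log_le_iff_le_exp (by linarith)).1 h2
  calc y * Real.exp (1-y) ≤ Real.exp ((y-1) - (y-1)^2/4) * Real.exp (1-y) :=
        mul_le_mul_of_nonneg_right h3 (Real.exp_pos _).le
    _ = Real.exp (-((y-1)^2/4)) := by rw [← Real.exp_add]; ring_nf
private lemma term_bound {y : ℝ} (hy1 : 1 < y) (hy2 : y ≤ 1.01) (n : ℕ) :
    Real.exp (-(y * ((n:ℝ)+1))) * (y * ((n:ℝ)+1)) ^ n / (n.factorial : ℝ)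
      ≤ (2/5) * Real.exp (-(((n:ℝ)+1) * (y-1)^2/4)) / Real.sqrt ((n:ℝ)+1) := by
  set m : ℝ := (n:ℝ)+1 with hm
  have hmpos : 0 < m := by positivity
  have hy0 : 0 < y := by linarith
  have hsq : 0 < Real.sqrt m := Real.sqrt_pos.2 hmpos
  have hfp : (0:ℝ) < (n.factorial : ℝ) := by exact_mod_cast n.factorial_pos
  rw [div_le_div_iff₀ hfp hsq, ← mul_le_mul_iff_of_pos_right hmpos]
  have hfac' : (5/2:ℝ) * Real.sqrt m * (m ^ (n+1) * Real.exp (-m)) ≤ (n.factorial:ℝ) * m := by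
    have h := factorial_lb n
    have hcast : ((n+1).factorial : ℝ) = (n.factorial:ℝ) * m := by
      rw [Nat.factorial_succ]; push_cast [hm]; ring
    rw [hcast] at h
    simpa [hm] using h
  have hcore : Real.exp (-(y*m)) * y ^ n
      ≤ Real.exp (-(m*(y-1)^2/4)) * Real.exp (-m) := by
    have hyy : (y * Real.exp (1-y))^(n+1) ≤ Real.exp (-((y-1)^2/4))^(n+1) :=
      pow_le_pow_left₀ (by positivity) (y_exp_le hy1 hy2) _
    have hl : (y * Real.exp (1-y))^(n+1)
        = y^(n+1) * (Real.exp (-(y*m)) * Real.exp m) := by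
      have hc : ((n+1:ℕ):ℝ) * (1-y) = -(y*m) + m := by push_cast [hm]; ring
      rw [mul_pow, ← Real.exp_nat_mul, hc, Real.exp_add]
    have hr : Real.exp (-((y-1)^2/4))^(n+1) = Real.exp (-(m*(y-1)^2/4)) := by
      rw [← Real.exp_nat_mul]; congr 1; push_cast [hm]; ring
    rw [hl, hr] at hyy
    have hy_pow : y^n ≤ y^(n+1) := pow_le_pow_right₀ hy1.le (Nat.le_succ n)
    have hme : Real.exp m * Real.exp (-m) = 1 := by rw [← Real.exp_add]; simp
    calc Real.exp (-(y*m)) * y^n ≤ Real.exp (-(y*m)) * y^(n+1) :=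
          mul_le_mul_of_nonneg_left hy_pow (Real.exp_pos _).le
      _ = (y^(n+1) * (Real.exp (-(y*m)) * Real.exp m)) * Real.exp (-m) := by
          rw [show (y ^ (n+1) * (Real.exp (-(y*m)) * Real.exp m)) * Real.exp (-m)
              = y ^ (n+1) * Real.exp (-(y*m)) * (Real.exp m * Real.exp (-m)) by ring, hme]
          ring
      _ ≤ Real.exp (-(m*(y-1)^2/4)) * Real.exp (-m) :=
          mul_le_mul_of_nonneg_right hyy (Real.exp_pos _).le
  calc Real.exp (-(y*m)) * (y*m)^n * Real.sqrt m * m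
      = (Real.exp (-(y*m)) * y^n) * (m^(n+1) * Real.sqrt m) := by rw [mul_pow]; ring
    _ ≤ (Real.exp (-(m*(y-1)^2/4)) * Real.exp (-m)) * (m^(n+1) * Real.sqrt m) :=
        mul_le_mul_of_nonneg_right hcore (by positivity)
    _ = (2/5) * Real.exp (-(m*(y-1)^2/4)) * ((5/2) * Real.sqrt m * (m^(n+1) * Real.exp (-m))) := by
        ring
    _ ≤ (2/5) * Real.exp (-(m*(y-1)^2/4)) * ((n.factorial:ℝ) * m) :=
        mul_le_mul_of_nonneg_left hfac' (by positivity)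
    _ = (2/5) * Real.exp (-(m*(y-1)^2/4)) * (n.factorial:ℝ) * m := by ring
private lemma theta_ratio (θ θ' : ℝ → ℝ)
    (hθ : ∀ x : ℝ, 1 < x → θ x ∈ Set.Ioo (0 : ℝ) 1 ∧ 1 - θ x = Real.exp (-(x * θ x)))
    (hθ' : ∀ x : ℝ, 1 < x → HasDerivAt θ (θ' x) x)
    {y : ℝ} (hy1 : 1 < y) (hy2 : y < 1.01) :
    0 ≤ θ y / θ' y ∧ θ y / θ' y ≤ (21/10) * (y - 1) := by
  obtain ⟨⟨ht0, ht1⟩, hid⟩ := hθ y hy1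
  set t := θ y with htdef
  have hy0 : (0:ℝ) < y := by linarith
  -- t ≤ 1 - exp(-y) ≤ 0.64
  have hexpy : Real.exp (-y) ≤ Real.exp (-(y * t)) := by
    apply Real.exp_le_exp.2; nlinarith
  have hey : (0.36 : ℝ) ≤ Real.exp (-y) := by
    have h1 : Real.exp y ≤ Real.exp 1 * Real.exp 0.01 := by
      rw [← Real.exp_add]; apply Real.exp_le_exp.2; linarith
    have h2 : Real.exp 1 < 2.7182818286 := Real.exp_one_lt_d9
    have h3 : Real.exp (0.01:ℝ) ≤ 1 / 0.99 := by
      have := Real.add_one_le_exp (-(0.01:ℝ))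
      have hp := Real.exp_pos (-(0.01:ℝ))
      have hprod : Real.exp (0.01:ℝ) * Real.exp (-(0.01:ℝ)) = 1 := by
        rw [← Real.exp_add]; simp
      nlinarith [Real.exp_pos (0.01:ℝ)]
    have h4 : Real.exp y ≤ 2.75 := by nlinarith [Real.exp_pos (0.01:ℝ)]
    have hprod : Real.exp (-y) * Real.exp y = 1 := by rw [← Real.exp_add]; simp
    nlinarith [Real.exp_pos (-y), Real.exp_pos y]
  have ht64 : t ≤ 0.64 := by nlinarith [hid, hexpy]
  have hyt1 : y * t ≤ 1 := by nlinarith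
  have hyt0 : 0 ≤ y * t := by positivity
  -- lower bound: 2(y-1) ≤ y^2 t
  have hlow : 2 * (y - 1) ≤ y^2 * t := by
    have h := exp_neg_le_quad hyt0
    rw [← hid] at h
    -- (y-1) t ≤ y² t² /2
    nlinarith [ht0]
  -- upper bound: y^2 t ≤ 3 (y-1)
  have hupp : y^2 * t ≤ 3 * (y - 1) := by
    have h := exp_neg_ge_cubic hyt0 hyt1
    rw [← hid] at h
    nlinarith [ht0]
  have htsmall : t ≤ 3 * (y - 1) := by nlinarith
  -- derivative identity
  have hD := hθ' y hy1
  have hprod : HasDerivAt (fun x => x * θ x) (1 * t + y * θ' y) y :=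
    (hasDerivAt_id y).mul hD
  have hG : HasDerivAt (fun x => Real.exp (-(x * θ x)))
      (Real.exp (-(y * t)) * (-(1 * t + y * θ' y))) y := hprod.neg.exp
  have hF : HasDerivAt (fun x => 1 - θ x) (-(θ' y)) y := by
    have h := (hasDerivAt_const y (1:ℝ)).sub hD; rw [zero_sub] at h; exact h
  have hEq : (fun x => 1 - θ x) =ᶠ[nhds y] (fun x => Real.exp (-(x * θ x))) :=
    Filter.eventuallyEq_of_mem (Ioi_mem_nhds hy1) (fun x hx => (hθ x hx).2)
  have hF' : HasDerivAt (fun x => 1 - θ x)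
      (Real.exp (-(y * t)) * (-(1 * t + y * θ' y))) y := hEq.hasDerivAt_iff.2 hG
  have hkey : -(θ' y) = Real.exp (-(y * t)) * (-(1 * t + y * θ' y)) := hF.unique hF'
  rw [← hid] at hkey
  -- θ' (1 - y + y t) = t (1 - t)
  have hDpos : 0 < 1 - y + y * t := by nlinarith
  have hθ'eq : θ' y * (1 - y + y * t) = t * (1 - t) := by nlinarith [hkey]
  have hθ'pos : 0 < θ' y := by
    have h1 : 0 < t * (1 - t) := by nlinarith
    nlinarith
  have hratio : θ y / θ' y = (1 - y + y * t) / (1 - t) := by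
    show t / θ' y = _
    rw [div_eq_div_iff (by positivity) (by linarith)]
    linear_combination -hθ'eq
  constructor
  · rw [htdef]; positivity
  · rw [hratio, div_le_iff₀ (by linarith)]
    nlinarith [hupp, htsmall, mul_nonneg (sub_nonneg.2 hy1.le) ht0.le,
      mul_nonneg (mul_nonneg (sub_nonneg.2 hy1.le) ht0.le) hy0.le, sq_nonneg (y-1)]
private lemma sqrt_diff_bound (n : ℕ) :
    (2/5 : ℝ) / Real.sqrt ((n:ℝ)+1) ≤ (4/5) * (Real.sqrt ((n:ℝ)+1) - Real.sqrt n) := by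
  have h1 : 0 < Real.sqrt ((n:ℝ)+1) := Real.sqrt_pos.2 (by positivity)
  have h5 : Real.sqrt (n:ℝ) ≤ Real.sqrt ((n:ℝ)+1) := Real.sqrt_le_sqrt (by linarith)
  have e1 : Real.sqrt ((n:ℝ)+1) ^ 2 = (n:ℝ)+1 := Real.sq_sqrt (by positivity)
  have e2 : Real.sqrt (n:ℝ) ^ 2 = (n:ℝ) := Real.sq_sqrt (by positivity)
  have h3 : (Real.sqrt ((n:ℝ)+1) - Real.sqrt n) * (Real.sqrt ((n:ℝ)+1) + Real.sqrt n) = 1 := by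
    nlinarith [e1, e2]
  rw [div_le_iff₀ h1]
  nlinarith [h3, h5, Real.sqrt_nonneg (n:ℝ)]

private lemma term_bound' {y : ℝ} (hy1 : 1 < y) (hy2 : y ≤ 1.01) (n : ℕ) :
    Real.exp (-(y * ((n:ℝ)+1))) * (y * ((n:ℝ)+1)) ^ n / (n.factorial : ℝ)
      ≤ (2/5) / Real.sqrt ((n:ℝ)+1) := by
  refine (term_bound hy1 hy2 n).trans ?_
  have h1 : Real.exp (-(((n:ℝ)+1) * (y-1)^2/4)) ≤ 1 := by
    have h0 : -(((n:ℝ)+1) * (y-1)^2/4) ≤ 0 := by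
      have : (0:ℝ) ≤ ((n:ℝ)+1) * (y-1)^2/4 := by positivity
      linarith
    simpa using Real.exp_le_exp.2 h0
  have hs : 0 < Real.sqrt ((n:ℝ)+1) := Real.sqrt_pos.2 (by positivity)
  have hnum : (2/5 : ℝ) * Real.exp (-(((n:ℝ)+1) * (y-1)^2/4)) ≤ 2/5 := by nlinarith
  calc (2/5) * Real.exp (-(((n:ℝ)+1) * (y-1)^2/4)) / Real.sqrt ((n:ℝ)+1)
      ≤ (2/5) / Real.sqrt ((n:ℝ)+1) := by
        apply div_le_div_of_nonneg_right hnum hs.le |>.trans_eq rfl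
    _ = (2/5) / Real.sqrt ((n:ℝ)+1) := rfl

private lemma sum1_bound {y c : ℝ} (hy1 : 1 < y) (hy2 : y ≤ 1.01) {R : ℝ}
    (hR0 : 0 ≤ R) (hRle : R ≤ 21/10*(y-1)) (hc : 0 < c) :
    ∑' n : ℕ, (if ((n:ℝ)+1) ≤ c/(y-1)^2 then
        R * (Real.exp (-(y*((n:ℝ)+1))) * (y*((n:ℝ)+1))^n / (n.factorial:ℝ)) else 0)
      ≤ 8 * Real.sqrt c := by
  have hε0 : (0:ℝ) < y - 1 := by linarith
  set N := c/(y-1)^2 with hN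
  set M := Nat.floor N with hM
  have hN0 : 0 ≤ N := by positivity
  set a : ℕ → ℝ := fun n =>
    Real.exp (-(y*((n:ℝ)+1))) * (y*((n:ℝ)+1))^n / (n.factorial:ℝ) with ha
  have ha0 : ∀ n, 0 ≤ a n := fun n => by
    rw [ha]; dsimp only; positivity
  set H : ℕ → ℝ := fun n => if ((n:ℝ)+1) ≤ N then
      (21/10)*(y-1)*((4/5)*(Real.sqrt ((n:ℝ)+1) - Real.sqrt n)) else 0 with hH
  have hterm : ∀ n : ℕ, (if ((n:ℝ)+1) ≤ N then R * a n else 0) ≤ H n := by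
    intro n
    rw [hH]; dsimp only
    split_ifs with h
    · refine mul_le_mul hRle ?_ (ha0 n) (by linarith)
      exact (term_bound' hy1 hy2 n).trans (sqrt_diff_bound n)
    · exact le_rfl
  have hsupp : ∀ n ∉ Finset.range M, H n = 0 := by
    intro n hn
    rw [hH]; dsimp only
    rw [if_neg]
    intro hle
    have h2 : n+1 ≤ M := Nat.le_floor (by push_cast; linarith)
    simp only [Finset.mem_range] at hn
    omega
  have hHsum : Summable H := summable_of_ne_finset_zero hsupp
  have hf0 : ∀ n : ℕ, 0 ≤ (if ((n:ℝ)+1) ≤ N then R * a n else 0) := by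
    intro n; split_ifs
    · exact mul_nonneg hR0 (ha0 n)
    · exact le_rfl
  have hfsum : Summable (fun n : ℕ => if ((n:ℝ)+1) ≤ N then R * a n else 0) :=
    hHsum.of_nonneg_of_le hf0 hterm
  refine (Summable.tsum_le_tsum hterm hfsum hHsum).trans ?_
  rw [tsum_eq_sum hsupp]
  have hdiff0 : ∀ i : ℕ, (0:ℝ) ≤ Real.sqrt ((i:ℝ)+1) - Real.sqrt i := fun i =>
    sub_nonneg.2 (Real.sqrt_le_sqrt (by linarith))
  have htele : ∑ n ∈ Finset.range M,
      ((21/10)*(y-1)*((4/5)*(Real.sqrt ((n:ℝ)+1) - Real.sqrt n)))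
      = (21/10)*(y-1)*(4/5) * Real.sqrt M := by
    have h := Finset.sum_range_sub (fun i : ℕ => Real.sqrt (i:ℝ)) M
    push_cast at h
    calc ∑ n ∈ Finset.range M,
        ((21/10)*(y-1)*((4/5)*(Real.sqrt ((n:ℝ)+1) - Real.sqrt n)))
        = (21/10)*(y-1)*(4/5) * ∑ n ∈ Finset.range M,
            (Real.sqrt ((n:ℝ)+1) - Real.sqrt n) := by
          rw [Finset.mul_sum]; apply Finset.sum_congr rfl; intros; ring
      _ = (21/10)*(y-1)*(4/5) * Real.sqrt M := by rw [h]; simp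
  have hstep : ∑ n ∈ Finset.range M, H n ≤ (21/10)*(y-1)*(4/5) * Real.sqrt M := by
    rw [← htele]
    apply Finset.sum_le_sum
    intro i _
    rw [hH]; dsimp only
    split_ifs with h
    · exact le_rfl
    · exact mul_nonneg (by positivity) (by nlinarith [hdiff0 i])
  refine hstep.trans ?_
  have hMN : Real.sqrt (M:ℝ) ≤ Real.sqrt c / (y-1) := by
    have h1 : (M:ℝ) ≤ N := Nat.floor_le hN0
    have h2 : Real.sqrt N = Real.sqrt c / (y-1) := by
      rw [hN, Real.sqrt_div hc.le, Real.sqrt_sq hε0.le]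
    rw [← h2]
    exact Real.sqrt_le_sqrt h1
  calc (21/10)*(y-1)*(4/5) * Real.sqrt (M:ℝ)
      ≤ (21/10)*(y-1)*(4/5) * (Real.sqrt c / (y-1)) := by
        apply mul_le_mul_of_nonneg_left hMN (by positivity)
    _ = (42/25) * Real.sqrt c := by field_simp; ring
    _ ≤ 8 * Real.sqrt c := by nlinarith [Real.sqrt_nonneg c]
private lemma sum2_bound {y C : ℝ} (hy1 : 1 < y) (hy2 : y ≤ 1.01) {R : ℝ}
    (hR0 : 0 ≤ R) (hRle : R ≤ 21/10*(y-1)) (hC : 1 < C) :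
    ∑' n : ℕ, (if C/(y-1)^2 ≤ ((n:ℝ)+1) then
        R * (Real.exp (-(y*((n:ℝ)+1))) * (y*((n:ℝ)+1))^n / (n.factorial:ℝ)) else 0)
      ≤ 20 * Real.exp (-C/8) := by
  have hε0 : (0:ℝ) < y - 1 := by linarith
  set r : ℝ := Real.exp (-((y-1)^2/8)) with hr
  have hr0 : 0 < r := Real.exp_pos _
  have hr1 : r < 1 := by
    rw [hr]
    apply Real.exp_lt_one_iff.2  -- might not exist; fallback below
    nlinarith
  set B : ℝ := (21/10)*(y-1) * ((2/5) * ((y-1)/Real.sqrt C)) * Real.exp (-C/8) with hB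
  have hB0 : 0 ≤ B := by
    rw [hB]
    have : 0 < Real.sqrt C := Real.sqrt_pos.2 (by linarith)
    positivity
  set a : ℕ → ℝ := fun n =>
    Real.exp (-(y*((n:ℝ)+1))) * (y*((n:ℝ)+1))^n / (n.factorial:ℝ) with ha
  have ha0 : ∀ n, 0 ≤ a n := fun n => by rw [ha]; dsimp only; positivity
  have hsqC : 0 < Real.sqrt C := Real.sqrt_pos.2 (by linarith)
  -- per-term bound
  have hterm : ∀ n : ℕ, (if C/(y-1)^2 ≤ ((n:ℝ)+1) then R * a n else 0) ≤ B * r * r ^ n := by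
    intro n
    have hrpow : (0:ℝ) < r ^ n := pow_pos hr0 n
    split_ifs with h
    · -- C/(y-1)² ≤ n+1
      have hm1 : (1:ℝ) ≤ (n:ℝ)+1 := by linarith [Nat.cast_nonneg (α := ℝ) n]
      have hsm : 0 < Real.sqrt ((n:ℝ)+1) := Real.sqrt_pos.2 (by positivity)
      -- 1/√(n+1) ≤ (y-1)/√C
      have hsqrtle : Real.sqrt C / (y-1) ≤ Real.sqrt ((n:ℝ)+1) := by
        have : Real.sqrt (C/(y-1)^2) ≤ Real.sqrt ((n:ℝ)+1) := Real.sqrt_le_sqrt h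
        rwa [Real.sqrt_div (by linarith : (0:ℝ) ≤ C), Real.sqrt_sq hε0.le] at this
      -- exp split
      have hexp : Real.exp (-(((n:ℝ)+1) * (y-1)^2/4))
          ≤ Real.exp (-C/8) * (r * r ^ n) := by
        have e1 : r * r ^ n = Real.exp (-(((n:ℝ)+1) * (y-1)^2/8)) := by
          rw [hr, ← pow_succ']
          rw [← Real.exp_nat_mul]
          congr 1
          push_cast
          ring
        have e2 : Real.exp (-(((n:ℝ)+1) * (y-1)^2/8)) ≤ Real.exp (-C/8) := by
          apply Real.exp_le_exp.2
          have h3 : C ≤ ((n:ℝ)+1) * (y-1)^2 := by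
            have := (div_le_iff₀ (by positivity : (0:ℝ) < (y-1)^2)).1 h
            linarith
          linarith
        calc Real.exp (-(((n:ℝ)+1) * (y-1)^2/4))
            = Real.exp (-(((n:ℝ)+1) * (y-1)^2/8)) * Real.exp (-(((n:ℝ)+1) * (y-1)^2/8)) := by
              rw [← Real.exp_add]; ring_nf
          _ ≤ Real.exp (-C/8) * (r * r ^ n) := by
              rw [← e1] at e2 ⊢
              have h4 : 0 < r * r ^ n := by positivity
              nlinarith [Real.exp_pos (-(((n:ℝ)+1) * (y-1)^2/8))]
      -- combine
      have hA : a n ≤ (2/5) * (Real.exp (-C/8) * (r * r^n)) / (Real.sqrt C / (y-1)) := by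
        refine (term_bound hy1 hy2 n).trans ?_
        have hd : 0 < Real.sqrt C / (y-1) := by positivity
        apply div_le_div₀ (by positivity) _ hd hsqrtle
        nlinarith [Real.exp_pos (-(((n:ℝ)+1) * (y-1)^2/4))]
      have hA' : a n ≤ (2/5) * ((y-1)/Real.sqrt C) * Real.exp (-C/8) * (r * r^n) := by
        refine hA.trans_eq ?_
        field_simp
      calc R * a n ≤ (21/10)*(y-1) * ((2/5) * ((y-1)/Real.sqrt C) * Real.exp (-C/8) * (r * r^n)) := by
            apply mul_le_mul hRle hA' (ha0 n) (by linarith)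
        _ = B * r * r ^ n := by rw [hB]; ring
    · positivity
  -- summability and sum
  have hgeom : Summable (fun n : ℕ => B * r * r ^ n) :=
    (summable_geometric_of_lt_one hr0.le hr1).mul_left (B * r)
  have hf0 : ∀ n : ℕ, 0 ≤ (if C/(y-1)^2 ≤ ((n:ℝ)+1) then R * a n else 0) := by
    intro n; split_ifs
    · exact mul_nonneg hR0 (ha0 n)
    · exact le_rfl
  have hfsum : Summable (fun n : ℕ => if C/(y-1)^2 ≤ ((n:ℝ)+1) then R * a n else 0) :=
    hgeom.of_nonneg_of_le hf0 hterm
  refine (Summable.tsum_le_tsum hterm hfsum hgeom).trans ?_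
  rw [tsum_mul_left, tsum_geometric_of_lt_one hr0.le hr1]
  -- B * r * (1-r)⁻¹ ≤ 20 exp(-C/8)
  have h1r : 0 < 1 - r := by linarith
  have hgeo_le : r * (1 - r)⁻¹ ≤ 8/(y-1)^2 := by
    rw [mul_inv_le_iff₀ h1r, div_mul_eq_mul_div, le_div_iff₀ (by positivity : (0:ℝ) < (y-1)^2)]
    have hee := Real.add_one_le_exp ((y-1)^2/8)
    have hprod : Real.exp ((y-1)^2/8) * r = 1 := by
      rw [hr, ← Real.exp_add]; simp
    nlinarith [hr0, mul_nonneg hr0.le (sub_nonneg.2 hee)]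
  calc B * r * (1-r)⁻¹ = B * (r * (1-r)⁻¹) := by ring
    _ ≤ B * (8/(y-1)^2) := mul_le_mul_of_nonneg_left hgeo_le hB0
    _ = (168/25) * Real.exp (-C/8) / Real.sqrt C := by rw [hB]; field_simp; ring
    _ ≤ 20 * Real.exp (-C/8) := by
      have hsq1 : 1 ≤ Real.sqrt C := by
        rw [show (1:ℝ) = Real.sqrt 1 by simp]
        exact Real.sqrt_le_sqrt (by linarith)
      rw [div_le_iff₀ hsqC]
      nlinarith [Real.exp_pos (-C/8)]
/-- Tail bounds for the truncated size-biased Borel–Tanner variable `B_y`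
(Lemma 4.1 of the paper): there is `y₀ > 1` such that for all `1 < y < y₀` and
`0 < c < 1 < C`,
`P(B_y ≤ c/(y−1)²) ≤ 8√c` and `P(B_y ≥ C/(y−1)²) ≤ 20·exp(−C/8)`. -/
theorem truncated_borel_tanner_tail_bounds
    (θ θ' : ℝ → ℝ)
    (hθ : ∀ x : ℝ, 1 < x → θ x ∈ Set.Ioo (0 : ℝ) 1 ∧ 1 - θ x = Real.exp (-(x * θ x)))
    (hθ' : ∀ x : ℝ, 1 < x → HasDerivAt θ (θ' x) x) :
    ∃ y₀ : ℝ, 1 < y₀ ∧ ∀ y : ℝ, 1 < y → y < y₀ → ∀ c C : ℝ, 0 < c → c < 1 → 1 < C →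
      (∑' m : ℕ+, (if (m : ℝ) ≤ c / (y - 1) ^ 2 then
          (θ y / θ' y) * (Real.exp (-(y * (m : ℕ))) * (y * (m : ℕ)) ^ ((m : ℕ) - 1)
            / (Nat.factorial ((m : ℕ) - 1))) else 0)) ≤ 8 * Real.sqrt c ∧
      (∑' m : ℕ+, (if C / (y - 1) ^ 2 ≤ (m : ℝ) then
          (θ y / θ' y) * (Real.exp (-(y * (m : ℕ))) * (y * (m : ℕ)) ^ ((m : ℕ) - 1)
            / (Nat.factorial ((m : ℕ) - 1))) else 0)) ≤ 20 * Real.exp (-C / 8) := by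
  refine ⟨1.01, by norm_num, ?_⟩
  intro y hy1 hy2 c C hc hc1 hC
  obtain ⟨hR0, hRle⟩ := theta_ratio θ θ' hθ hθ' hy1 hy2
  have hy2' : y ≤ 1.01 := hy2.le
  set R := θ y / θ' y with hRdef
  have hEquiv : ∀ F : ℕ+ → ℝ, ∑' m : ℕ+, F m = ∑' n : ℕ, F (n.succPNat) := fun F =>
    (Equiv.pnatEquivNat.symm.tsum_eq F).symm
  have hclean : ∀ (P : ℝ → Prop) [DecidablePred P] (n : ℕ),
      (if P ((n.succPNat : ℕ+) : ℝ) then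
          R * (Real.exp (-(y * ((n.succPNat : ℕ+) : ℕ))) *
            (y * ((n.succPNat : ℕ+) : ℕ)) ^ (((n.succPNat : ℕ+) : ℕ) - 1)
            / (Nat.factorial (((n.succPNat : ℕ+) : ℕ) - 1))) else 0)
        = (if P ((n:ℝ)+1) then
            R * (Real.exp (-(y * ((n:ℝ)+1))) * (y * ((n:ℝ)+1)) ^ n / (n.factorial : ℝ))
          else 0) := by
    intro P _ n
    have h1 : ((n.succPNat : ℕ+) : ℕ) = n + 1 := Nat.succPNat_coe n
    simp only [h1, Nat.add_sub_cancel, Nat.cast_add, Nat.cast_one]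
  constructor
  · rw [hEquiv, tsum_congr (fun n => hclean (fun x => x ≤ c/(y-1)^2) n)]
    exact sum1_bound hy1 hy2' hR0 hRle hc
  · rw [hEquiv, tsum_congr (fun n => hclean (fun x => C/(y-1)^2 ≤ x) n)]
    exact sum2_bound hy1 hy2' hR0 hRle hC
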